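/- Let X be a compact Hausdorff space, Y a closed subspace of X, and S ⊆ Ȳ. Then the topological entropy of S computed relative to Y equals the topological entropy of S computed relative to X: H^t_Y(S) = H^t_X(S). -/

import Mathlib

open Set Filter Topology
open scoped ENNReal

/-- An open cover of a topological space: a family of open sets whose union is the whole space. -/
def IsOpenCover {Z : Type*} [TopologicalSpace Z] (𝒰 : Set (Set Z)) : Prop :=
  (∀ U ∈ 𝒰, IsOpen U) ∧ ⋃₀ 𝒰 = Set.univ

/-- `coverNum S 𝒰` : the minimal cardinality `N_{S/Z}(𝒰)` of a finite subfamily of `𝒰`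
whose union contains `S` (junk value `0` if there is no such finite subfamily). -/
noncomputable def coverNum {Z : Type*} (S : Set Z) (𝒰 : Set (Set Z)) : ℕ :=
  sInf {m | ∃ F : Finset (Set Z), ↑F ⊆ 𝒰 ∧ S ⊆ ⋃₀ (F : Set (Set Z)) ∧ F.card = m}

/-- The cover `𝒰̄ⁿ` of the sequence space `ℕ → Z`, consisting of the sets
`U_{i_0} × ⋯ × U_{i_{n-1}} × Z × Z × ⋯` with the `U_{i_j}` members of `𝒰`. -/
def seqCover {Z : Type*} (𝒰 : Set (Set Z)) (n : ℕ) : Set (Set (ℕ → Z)) :=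
  {V | ∃ U : ℕ → Set Z, (∀ i < n, U i ∈ 𝒰) ∧ V = {x : ℕ → Z | ∀ i < n, x i ∈ U i}}

/-- The topological entropy `H^t(S,𝒰)` of `S ⊆ Z̄ = ℕ → Z` relative to the cover `𝒰`. -/
noncomputable def entropyRel {Z : Type*} (S : Set (ℕ → Z)) (𝒰 : Set (Set Z)) : ℝ≥0∞ :=
  Filter.atTop.limsup fun n : ℕ =>
    ENNReal.ofReal ((1 / n : ℝ) * Real.log (coverNum S (seqCover 𝒰 n)))

/-- The topological entropy `H^t_Z(S)` of `S` as a subset of the sequence space `Z̄ = ℕ → Z`. -/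
noncomputable def topEntropy (Z : Type*) [TopologicalSpace Z] (S : Set (ℕ → Z)) : ℝ≥0∞ :=
  ⨆ (𝒰 : Set (Set Z)) (_ : IsOpenCover 𝒰), entropyRel S 𝒰

namespace TopEntropyAux

variable {X : Type*} {Y : Set X}

/-- Inclusion of sequence spaces `Ȳ → X̄`. -/
def emb (Y : Set X) : (ℕ → Y) → (ℕ → X) := fun u n => (u n : X)

lemma transfer_restrict {𝒰 : Set (Set X)} {𝒲 : Set (Set Y)}
    (hb : ∀ U ∈ 𝒰, (Subtype.val ⁻¹' U : Set Y) ∈ 𝒲) (S : Set (ℕ → Y)) (n : ℕ)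
    (F : Finset (Set (ℕ → X))) (hF : ↑F ⊆ seqCover 𝒰 n)
    (hcov : emb Y '' S ⊆ ⋃₀ (F : Set (Set (ℕ → X)))) :
    ∃ F' : Finset (Set (ℕ → Y)), ↑F' ⊆ seqCover 𝒲 n ∧ S ⊆ ⋃₀ (F' : Set (Set (ℕ → Y))) ∧
      F'.card ≤ F.card := by
  classical
  refine ⟨F.image (fun V => emb Y ⁻¹' V), ?_, ?_, Finset.card_image_le⟩
  · intro V' hV'
    simp only [Finset.coe_image, Set.mem_image, Finset.mem_coe] at hV'
    obtain ⟨V, hVF, rfl⟩ := hV'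
    obtain ⟨U, hU, rfl⟩ := hF hVF
    refine ⟨fun i => (Subtype.val ⁻¹' U i : Set Y), fun i hi => hb _ (hU i hi), ?_⟩
    ext u
    simp [emb]
  · intro u hu
    obtain ⟨V, hVF, hmem⟩ := hcov ⟨u, hu, rfl⟩
    exact ⟨emb Y ⁻¹' V, by
      simp only [Finset.coe_image]; exact Set.mem_image_of_mem _ hVF, hmem⟩

lemma seqCover_lift {𝒰 : Set (Set X)} {𝒲 : Set (Set Y)}
    (ha : ∀ W ∈ 𝒲, ∃ U ∈ 𝒰, (Subtype.val ⁻¹' U : Set Y) = W) {n : ℕ}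
    {V : Set (ℕ → Y)} (hV : V ∈ seqCover 𝒲 n) :
    ∃ V' ∈ seqCover 𝒰 n, emb Y '' V ⊆ V' := by
  obtain ⟨W, hW, rfl⟩ := hV
  have h : ∀ i, ∃ U : Set X, i < n → U ∈ 𝒰 ∧ (Subtype.val ⁻¹' U : Set Y) = W i := by
    intro i
    by_cases hi : i < n
    · obtain ⟨U, hU1, hU2⟩ := ha (W i) (hW i hi)
      exact ⟨U, fun _ => ⟨hU1, hU2⟩⟩
    · exact ⟨∅, fun h' => absurd h' hi⟩
  choose U hU using h
  refine ⟨{x : ℕ → X | ∀ i < n, x i ∈ U i}, ⟨U, fun i hi => (hU i hi).1, rfl⟩, ?_⟩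
  rintro x ⟨u, hu, rfl⟩ i hi
  have h2 : u i ∈ (Subtype.val ⁻¹' U i : Set Y) := by rw [(hU i hi).2]; exact hu i hi
  exact h2

lemma transfer_extend {𝒰 : Set (Set X)} {𝒲 : Set (Set Y)}
    (ha : ∀ W ∈ 𝒲, ∃ U ∈ 𝒰, (Subtype.val ⁻¹' U : Set Y) = W) (S : Set (ℕ → Y)) (n : ℕ)
    (G : Finset (Set (ℕ → Y))) (hG : ↑G ⊆ seqCover 𝒲 n)
    (hcov : S ⊆ ⋃₀ (G : Set (Set (ℕ → Y)))) :
    ∃ F : Finset (Set (ℕ → X)), ↑F ⊆ seqCover 𝒰 n ∧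
      emb Y '' S ⊆ ⋃₀ (F : Set (Set (ℕ → X))) ∧ F.card ≤ G.card := by
  classical
  have h : ∀ V : Set (ℕ → Y), ∃ V' : Set (ℕ → X),
      V ∈ seqCover 𝒲 n → V' ∈ seqCover 𝒰 n ∧ emb Y '' V ⊆ V' := by
    intro V
    by_cases hV : V ∈ seqCover 𝒲 n
    · obtain ⟨V', h1, h2⟩ := seqCover_lift ha hV
      exact ⟨V', fun _ => ⟨h1, h2⟩⟩
    · exact ⟨∅, fun h' => absurd h' hV⟩
  choose g hg using h
  refine ⟨G.image g, ?_, ?_, Finset.card_image_le⟩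
  · intro V' hV'
    simp only [Finset.coe_image, Set.mem_image, Finset.mem_coe] at hV'
    obtain ⟨V, hVG, rfl⟩ := hV'
    exact (hg V (hG hVG)).1
  · rintro x ⟨u, hu, rfl⟩
    obtain ⟨V, hVG, hmem⟩ := hcov hu
    exact ⟨g V, by
      simp only [Finset.coe_image]; exact Set.mem_image_of_mem _ hVG,
      (hg V (hG hVG)).2 ⟨u, hmem, rfl⟩⟩

lemma coverNum_le_of {Z Z' : Type*} {T : Set Z} {T' : Set Z'} {𝒜 : Set (Set Z)}
    {ℬ : Set (Set Z')}
    (h1 : ∀ F : Finset (Set Z), ↑F ⊆ 𝒜 → T ⊆ ⋃₀ (F : Set (Set Z)) →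
      ∃ F' : Finset (Set Z'), ↑F' ⊆ ℬ ∧ T' ⊆ ⋃₀ (F' : Set (Set Z')) ∧ F'.card ≤ F.card)
    (h2 : ∀ F' : Finset (Set Z'), ↑F' ⊆ ℬ → T' ⊆ ⋃₀ (F' : Set (Set Z')) →
      ∃ F : Finset (Set Z), ↑F ⊆ 𝒜 ∧ T ⊆ ⋃₀ (F : Set (Set Z)) ∧ F.card ≤ F'.card) :
    coverNum T 𝒜 ≤ coverNum T' ℬ := by
  rcases Set.eq_empty_or_nonempty
      {m | ∃ F' : Finset (Set Z'), ↑F' ⊆ ℬ ∧ T' ⊆ ⋃₀ (F' : Set (Set Z')) ∧ F'.card = m}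
      with hB | hB
  · have hA : {m | ∃ F : Finset (Set Z), ↑F ⊆ 𝒜 ∧ T ⊆ ⋃₀ (F : Set (Set Z)) ∧ F.card = m}
        = ∅ := by
      rw [Set.eq_empty_iff_forall_notMem]
      rintro m ⟨F, g1, g2, rfl⟩
      obtain ⟨F', k1, k2, _⟩ := h1 F g1 g2
      exact Set.eq_empty_iff_forall_notMem.mp hB F'.card ⟨F', k1, k2, rfl⟩
    unfold coverNum
    rw [hA, hB]
  · have hmem : coverNum T' ℬ ∈
        {m | ∃ F' : Finset (Set Z'), ↑F' ⊆ ℬ ∧ T' ⊆ ⋃₀ (F' : Set (Set Z')) ∧ F'.card = m} :=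
      Nat.sInf_mem hB
    obtain ⟨F', k1, k2, k3⟩ := hmem
    obtain ⟨F, g1, g2, g3⟩ := h2 F' k1 k2
    calc coverNum T 𝒜 ≤ F.card := Nat.sInf_le ⟨F, g1, g2, rfl⟩
      _ ≤ F'.card := g3
      _ = coverNum T' ℬ := k3

variable [TopologicalSpace X]

/-- A canonical open extension of an open set of `Y` to `X`. -/
def extOpen (Y : Set X) (V : Set Y) : Set X :=
  ⋃₀ {U : Set X | IsOpen U ∧ (Subtype.val ⁻¹' U : Set Y) ⊆ V}

lemma extOpen_isOpen (V : Set Y) : IsOpen (extOpen Y V) :=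
  isOpen_sUnion fun _ h => h.1

lemma preimage_extOpen {V : Set Y} (hV : IsOpen V) :
    (Subtype.val ⁻¹' extOpen Y V : Set Y) = V := by
  apply subset_antisymm
  · rintro y ⟨U, ⟨_, hUsub⟩, hyU⟩
    exact hUsub hyU
  · obtain ⟨U, hUo, hUp⟩ := isOpen_induced_iff.mp hV
    intro y hy
    exact ⟨U, ⟨hUo, hUp.le⟩, by rw [← hUp] at hy; exact hy⟩

end TopEntropyAux

theorem topEntropy_subspace {X : Type*} [TopologicalSpace X] [CompactSpace X] [T2Space X]
    (Y : Set X) (hY : IsClosed Y) (S : Set (ℕ → Y)) :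
    topEntropy Y S = topEntropy X ((fun u : ℕ → Y => fun n => (u n : X)) '' S) := by
  classical
  open TopEntropyAux in
  have hS' : (fun u : ℕ → Y => fun n => (u n : X)) '' S = emb Y '' S := rfl
  rw [hS']
  apply le_antisymm
  · refine iSup₂_le fun 𝒱 h𝒱 => ?_
    rcases 𝒱.eq_empty_or_nonempty with hVe | ⟨V₀, hV₀⟩
    · -- `Y` is empty, so `S = ∅` and the entropy is `0`.
      have hYe : IsEmpty Y := by
        rw [← Set.univ_eq_empty_iff, ← h𝒱.2, hVe, Set.sUnion_empty]
      have hcov : ∀ n, coverNum S (seqCover 𝒱 n) = 0 := by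
        intro n
        apply Nat.sInf_eq_zero.mpr
        exact Or.inl ⟨∅, by simp, fun u _ => (hYe.false (u 0)).elim, Finset.card_empty⟩
      have : entropyRel S 𝒱 = 0 := by
        unfold entropyRel
        have : (fun n : ℕ =>
            ENNReal.ofReal ((1 / n : ℝ) * Real.log (coverNum S (seqCover 𝒱 n))))
            = fun _ : ℕ => (0 : ℝ≥0∞) := by
          funext n
          rw [hcov n]
          simp
        rw [this, Filter.limsup_const]
      rw [this]
      exact zero_le
    · set 𝒰 : Set (Set X) := (fun V => TopEntropyAux.extOpen Y V ∪ Yᶜ) '' 𝒱 with h𝒰def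
      have hpre : ∀ V ∈ 𝒱,
          (Subtype.val ⁻¹' (TopEntropyAux.extOpen Y V ∪ Yᶜ) : Set Y) = V := by
        intro V hV
        have h1 : (Subtype.val ⁻¹' (Yᶜ : Set X) : Set Y) = ∅ := by
          ext y; simp [y.2]
        rw [Set.preimage_union, h1, Set.union_empty,
          TopEntropyAux.preimage_extOpen (h𝒱.1 V hV)]
      have hb : ∀ U ∈ 𝒰, (Subtype.val ⁻¹' U : Set Y) ∈ 𝒱 := by
        rintro _ ⟨V, hV, rfl⟩
        rw [hpre V hV]; exact hV
      have ha : ∀ W ∈ 𝒱, ∃ U ∈ 𝒰, (Subtype.val ⁻¹' U : Set Y) = W := by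
        intro W hW
        exact ⟨TopEntropyAux.extOpen Y W ∪ Yᶜ, Set.mem_image_of_mem _ hW, hpre W hW⟩
      have h𝒰 : IsOpenCover 𝒰 := by
        constructor
        · rintro _ ⟨V, _, rfl⟩
          exact (TopEntropyAux.extOpen_isOpen V).union hY.isOpen_compl
        · rw [Set.eq_univ_iff_forall]
          intro x
          by_cases hx : x ∈ Y
          · have : (⟨x, hx⟩ : Y) ∈ ⋃₀ 𝒱 := by rw [h𝒱.2]; trivial
            obtain ⟨V, hV, hmem⟩ := this
            refine ⟨TopEntropyAux.extOpen Y V ∪ Yᶜ, Set.mem_image_of_mem _ hV, Or.inl ?_⟩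
            have : (⟨x, hx⟩ : Y) ∈ (Subtype.val ⁻¹' TopEntropyAux.extOpen Y V : Set Y) := by
              rw [TopEntropyAux.preimage_extOpen (h𝒱.1 V hV)]; exact hmem
            exact this
          · exact ⟨TopEntropyAux.extOpen Y V₀ ∪ Yᶜ, Set.mem_image_of_mem _ hV₀, Or.inr hx⟩
      have hkey : entropyRel S 𝒱 = entropyRel (emb Y '' S) 𝒰 := by
        unfold entropyRel
        congr 1
        funext n
        have : coverNum S (seqCover 𝒱 n) = coverNum (emb Y '' S) (seqCover 𝒰 n) :=
          le_antisymm
            (TopEntropyAux.coverNum_le_of (TopEntropyAux.transfer_extend ha S n)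
              (TopEntropyAux.transfer_restrict hb S n))
            (TopEntropyAux.coverNum_le_of (TopEntropyAux.transfer_restrict hb S n)
              (TopEntropyAux.transfer_extend ha S n))
        rw [this]
      rw [hkey]
      exact le_iSup₂ (f := fun 𝒰 (_ : IsOpenCover 𝒰) => entropyRel (emb Y '' S) 𝒰) 𝒰 h𝒰
  · refine iSup₂_le fun 𝒰 h𝒰 => ?_
    set 𝒲 : Set (Set Y) := (fun U : Set X => (Subtype.val ⁻¹' U : Set Y)) '' 𝒰 with h𝒲def
    have hb : ∀ U ∈ 𝒰, (Subtype.val ⁻¹' U : Set Y) ∈ 𝒲 := fun U hU =>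
      Set.mem_image_of_mem _ hU
    have ha : ∀ W ∈ 𝒲, ∃ U ∈ 𝒰, (Subtype.val ⁻¹' U : Set Y) = W := by
      rintro _ ⟨U, hU, rfl⟩
      exact ⟨U, hU, rfl⟩
    have h𝒲 : IsOpenCover 𝒲 := by
      constructor
      · rintro _ ⟨U, hU, rfl⟩
        exact (h𝒰.1 U hU).preimage continuous_subtype_val
      · rw [Set.eq_univ_iff_forall]
        intro y
        have : (y : X) ∈ ⋃₀ 𝒰 := by rw [h𝒰.2]; trivial
        obtain ⟨U, hU, hmem⟩ := this
        exact ⟨Subtype.val ⁻¹' U, Set.mem_image_of_mem _ hU, hmem⟩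
    have hkey : entropyRel (emb Y '' S) 𝒰 = entropyRel S 𝒲 := by
      unfold entropyRel
      congr 1
      funext n
      have : coverNum S (seqCover 𝒲 n) = coverNum (emb Y '' S) (seqCover 𝒰 n) :=
        le_antisymm
          (TopEntropyAux.coverNum_le_of (TopEntropyAux.transfer_extend ha S n)
            (TopEntropyAux.transfer_restrict hb S n))
          (TopEntropyAux.coverNum_le_of (TopEntropyAux.transfer_restrict hb S n)
            (TopEntropyAux.transfer_extend ha S n))
      rw [this]
    rw [hkey]
    exact le_iSup₂ (f := fun 𝒲 (_ : IsOpenCover 𝒲) => entropyRel S 𝒲) 𝒲 h𝒲
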